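/- Fix X ∈ {B,C,D} and a positive integer n, and let w ∈ W^X_n. Choose integers i and k with i < k and 1 ≤ k ≤ n such that t := t_{ik} is a reflection of W^X_∞ (i.e. i ≠ −k, and i ≠ 0 when X = D) and ℓ^X(wt) = ℓ^X(w)+1. Then: (a) wt ∈ W^X_{n+1}; (b) wt(k) < w(k); (c) Des(wt) ⊆ Des(w) ∪ {k−1}, where Des(u) = {i > 0 : u(i) > u(i+1)}. Moreover, if wt ∉ W^X_n, then additionally: (d) i = −n−1; and (e) for every integer j with i < j < k such that t_{jk} is a reflection of W^X_∞, one has ℓ^X(wt·t_{jk}) ≠ ℓ^X(wt)+1. -/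

import Mathlib

open scoped Classical

noncomputable section

/-! ## Signed permutations -/

/-- We model signed permutations (and ordinary permutations of the positive
integers) inside the group `Equiv.Perm ℤ`. -/
abbrev SPerm := Equiv.Perm ℤ

/-- `w` is a signed permutation: `w(-i) = -w(i)` and finite support. -/
def IsSgn (w : SPerm) : Prop :=
  (∀ i : ℤ, w (-i) = -(w i)) ∧ Set.Finite {i : ℤ | w i ≠ i}

/-- The classical types B, C, D. -/
inductive XType | B | C | D
deriving DecidableEq

/-- `ℓ0(w)`: the number of positive `i` with `w i < 0`. -/
def negCount (w : SPerm) : ℕ := Set.ncard {i : ℤ | 0 < i ∧ w i < 0}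

/-- Membership in `W^X_∞`. -/
def IsW : XType → SPerm → Prop
  | XType.B, w => IsSgn w
  | XType.C, w => IsSgn w
  | XType.D, w => IsSgn w ∧ Even (negCount w)

/-- Membership in `W^X_n`: an element of `W^X_∞` fixing every `i` with `|i| > n`. -/
def IsWn (X : XType) (n : ℕ) (w : SPerm) : Prop :=
  IsW X w ∧ ∀ i : ℤ, (n : ℤ) < |i| → w i = i

/-- `inv(w)`: the number of pairs `(i,j)` of integers with `i < j` and `w i > w j`. -/
def invP (w : SPerm) : ℕ := Set.ncard {p : ℤ × ℤ | p.1 < p.2 ∧ w p.2 < w p.1}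

/-- The Coxeter length functions `ℓ^B = ℓ^C = (inv + ℓ0)/2`, `ℓ^D = (inv - ℓ0)/2`. -/
def lenX : XType → SPerm → ℕ
  | XType.B, w => (invP w + negCount w) / 2
  | XType.C, w => (invP w + negCount w) / 2
  | XType.D, w => (invP w - negCount w) / 2

/-- The element `t_{i,j}` exchanging `i ↔ j` and `-i ↔ -j`; in particular
`t_{0,k}` exchanges `-k ↔ k`, and `t_{j,j} = t_{-j,j} = 1`. -/
def tt (i j : ℤ) : SPerm :=
  if i = 0 then Equiv.swap (-j) j
  else if j = 0 then Equiv.swap (-i) i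
  else if i = j ∨ i = -j then 1
  else Equiv.swap i j * Equiv.swap (-i) (-j)

/-- The simple generators: `st 0 = t_{0,1}`, `st (-1) = t_{-1,2}`,
`st i = t_{i,i+1}` for `i ≥ 1`. -/
def st (a : ℤ) : SPerm := if a = -1 then tt (-1) 2 else tt a (a + 1)

/-- One step of the Demazure product: multiply by `st a` if this increases
length by one, else do nothing. -/
def demStep (X : XType) (w : SPerm) (a : ℤ) : SPerm :=
  if lenX X (w * st a) = lenX X w + 1 then w * st a else w

/-- Demazure product of `w` with the word `l` of simple generators. -/
def demFold (X : XType) (w : SPerm) (l : List ℤ) : SPerm := l.foldl (demStep X) w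

/-- Letters allowed in Hecke words of type `X`. -/
def allowedLetter : XType → ℤ → Prop
  | XType.B, a => 0 ≤ a
  | XType.C, a => 0 ≤ a
  | XType.D, a => a = -1 ∨ 1 ≤ a

/-- `l ∈ H^X(w)`: a Hecke word for `w` of type `X`. -/
def HeckeWord (X : XType) (w : SPerm) (l : List ℤ) : Prop :=
  (∀ a ∈ l, allowedLetter X a) ∧ demFold X 1 l = w

/-- `o^X(a)`. -/
def oX : XType → List ℤ → ℕ
  | XType.B, l => l.count 0
  | XType.C, _ => 0
  | XType.D, l => l.count (-1) + l.count 1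

/-- `b ∈ C^X(a)`: a compatible sequence for the word `a`. -/
def CompatX (X : XType) (a : List ℤ) (b : List ℕ) : Prop :=
  b.length = a.length ∧ (∀ x ∈ b, 0 < x) ∧ b.Pairwise (· ≤ ·) ∧
  (∀ i : ℕ, 0 < i → i + 1 < a.length →
    |a.getD (i-1) 0| ≤ |a.getD i 0| → |a.getD (i+1) 0| ≤ |a.getD i 0| →
    b.getD (i-1) 0 < b.getD (i+1) 0) ∧
  (X = XType.B → ∀ i : ℕ, i + 1 < a.length → a.getD i 0 = 0 → a.getD (i+1) 0 = 0 →
    b.getD i 0 < b.getD (i+1) 0) ∧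
  (X = XType.D → ∀ i : ℕ, i + 1 < a.length →
    a.getD i 0 = a.getD (i+1) 0 → (a.getD i 0 = -1 ∨ a.getD i 0 = 1) →
    b.getD i 0 < b.getD (i+1) 0)

/-- `γ(a,b)`: the number of `i` with `a_i = a_{i+1}` and `b_i = b_{i+1}`. -/
def gammaC (a : List ℤ) (b : List ℕ) : ℕ :=
  (List.range (a.length - 1)).countP
    (fun i => decide (a.getD i 0 = a.getD (i+1) 0 ∧ b.getD i 0 = b.getD (i+1) 0))

/-- `ℤ[β]`, with `β = Polynomial.X`. -/
abbrev PolyB := Polynomial ℤ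

/-- The K-Stanley symmetric function `F^X_w(z) ∈ ℤ[β]⟦z_1,z_2,...⟧`
(the variable `z_i` has index `i ≥ 1`; index `0` is unused), defined
coefficientwise: the coefficient of a monomial is the (finite) sum of the
contributions `2^{|b|-γ(a,b)-o^X(a)} β^{ℓ(a)-ℓ^X(w)}` over all pairs of a
Hecke word `a ∈ H^X(w)` and compatible sequence `b ∈ C^X(a)` with `z_b`
equal to the monomial. -/
def KSF (X : XType) (w : SPerm) : MvPowerSeries ℕ PolyB :=
  fun d => ∑ᶠ (p : List ℤ × List ℕ)
    (_ : HeckeWord X w p.1 ∧ CompatX X p.1 p.2 ∧ ∀ k : ℕ, d k = p.2.count k),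
    (2 : PolyB) ^ (p.2.dedup.length - gammaC p.1 p.2 - oX X p.1) *
      Polynomial.X ^ (p.1.length - lenX X w)

/-- A signed permutation is Grassmannian if `w(1) < w(2) < ⋯`. -/
def IsGrassmannian (w : SPerm) : Prop := ∀ i : ℤ, 0 < i → w i < w (i + 1)

/-- The descent set `Des(w) = {i > 0 : w(i) > w(i+1)}` (as a set of naturals). -/
def DesSet (w : SPerm) : Set ℕ := {i : ℕ | 0 < i ∧ w ((i : ℤ) + 1) < w (i : ℤ)}

/-- The last descent `LD(w) = max({0} ∪ Des(w))`. -/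
def LD (w : SPerm) : ℕ := sSup (DesSet w)

/-- The partial order `≺_LD`. -/
def precLD (u w : SPerm) : Prop :=
  LD u < LD w ∨ (0 < LD u ∧ LD u = LD w ∧ u (LD u : ℤ) < w (LD w : ℤ))

/-- `IncSteps f u ts` : successive right multiplications of `u` by the
elements of `ts` each increase `f` by exactly one. -/
def IncSteps (f : SPerm → ℕ) : SPerm → List SPerm → Prop
  | _, [] => True
  | u, t :: ts => f (u * t) = f u + 1 ∧ IncSteps f (u * t) ts

/-! ## Strict partitions and K-theoretic Schur P- and Q-functions -/

section

/-- A strict partition, encoded as a strictly decreasing list of positive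
integers. -/
def StrictPart (l : List ℕ) : Prop := l.Pairwise (· > ·) ∧ ∀ x ∈ l, 0 < x

/-- A partition (weakly decreasing list of positive integers). -/
def Partn (l : List ℕ) : Prop := l.Pairwise (· ≥ ·) ∧ ∀ x ∈ l, 0 < x

/-- Membership of the (1-based) box `p = (i,j)` in the shifted diagram `SD_l`. -/
def inSD (l : List ℕ) (p : ℕ × ℕ) : Prop :=
  1 ≤ p.1 ∧ p.1 ≤ l.length ∧ p.1 ≤ p.2 ∧ p.2 < p.1 + l.getD (p.1 - 1) 0

/-- `mu ⊆ lam`, i.e. `SD_mu ⊆ SD_lam`. -/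
def subShape (mu lam : List ℕ) : Prop := ∀ p, inSD mu p → inSD lam p

/-- Membership in the skew shifted diagram `SD_{lam/mu}`. -/
def inSkew (lam mu : List ℕ) (p : ℕ × ℕ) : Prop := inSD lam p ∧ ¬ inSD mu p

/-- A set-valued shifted tableau of shape `lam/mu`:  a finite nonempty set of
letters in each box of the skew shape, the empty set elsewhere.  The primed
alphabet `1' < 1 < 2' < 2 < ⋯` is encoded in `ℕ` by `k ↦ 2k` and `k' ↦ 2k-1`
(so primed letters are odd codes, and the order on codes is the alphabet
order). -/
def IsSVT (lam mu : List ℕ) (T : ℕ × ℕ → Finset ℕ) : Prop :=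
  (∀ p, (T p).Nonempty ↔ inSkew lam mu p) ∧ (∀ p, ∀ v ∈ T p, 0 < v)

/-- Semistandardness of a set-valued shifted tableau. -/
def IsSSVT (lam mu : List ℕ) (T : ℕ × ℕ → Finset ℕ) : Prop :=
  IsSVT lam mu T ∧
  (∀ i j : ℕ, inSkew lam mu (i, j) → inSkew lam mu (i, j+1) →
    (∀ u ∈ T (i, j), ∀ v ∈ T (i, j+1), u ≤ v) ∧
    (∀ v ∈ T (i, j), v ∈ T (i, j+1) → Even v)) ∧
  (∀ i j : ℕ, inSkew lam mu (i, j) → inSkew lam mu (i+1, j) →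
    (∀ u ∈ T (i, j), ∀ v ∈ T (i+1, j), u ≤ v) ∧
    (∀ v ∈ T (i, j), v ∈ T (i+1, j) → Odd v))

/-- `|T|`: total number of letters in `T`. -/
def tabSize (T : ℕ × ℕ → Finset ℕ) : ℕ := ∑ᶠ p : ℕ × ℕ, (T p).card

/-- The exponent of `z_k` in `z^T`: the number of boxes containing the letter
`k` (code `2k`) plus the number containing `k'` (code `2k-1`). -/
def tabWt (T : ℕ × ℕ → Finset ℕ) (k : ℕ) : ℕ :=
  Set.ncard {p : ℕ × ℕ | 2 * k ∈ T p} + Set.ncard {p : ℕ × ℕ | 2 * k - 1 ∈ T p}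

/-- The K-theoretic Schur P-function `GP_{lam/mu}(z) ∈ ℤ[β]⟦z_1,z_2,...⟧`,
defined coefficientwise as a tableau generating function. -/
def GPs (lam mu : List ℕ) : MvPowerSeries ℕ PolyB :=
  fun d => ∑ᶠ (T : ℕ × ℕ → Finset ℕ)
    (_ : IsSSVT lam mu T ∧
      (∀ i : ℕ, inSkew lam mu (i, i) → ∀ v ∈ T (i, i), Even v) ∧
      (∀ k : ℕ, d k = tabWt T k)),
    (Polynomial.X : PolyB) ^ (tabSize T - (lam.sum - mu.sum))

/-- The K-theoretic Schur Q-function `GQ_{lam/mu}(z) ∈ ℤ[β]⟦z_1,z_2,...⟧`. -/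
def GQs (lam mu : List ℕ) : MvPowerSeries ℕ PolyB :=
  fun d => ∑ᶠ (T : ℕ × ℕ → Finset ℕ)
    (_ : IsSSVT lam mu T ∧ (∀ k : ℕ, d k = tabWt T k)),
    (Polynomial.X : PolyB) ^ (tabSize T - (lam.sum - mu.sum))

end

/-! ## Type A: the symmetric group and double Grothendieck polynomials

We identify `S_∞` (permutations of the positive integers with finite support)
with the subgroup `W^A_∞` of signed permutations preserving the positive
integers; under this identification the Coxeter length of type A equals
`ℓ^B`, and the transposition `(i,j)` of positive integers corresponds to
`tt i j`. -/

section

/-- Membership in `S_∞ = W^A_∞`. -/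
def IsAperm (w : SPerm) : Prop := IsSgn w ∧ ∀ i : ℤ, 0 < i → 0 < w i

/-- The type A Coxeter length. -/
def lenA (w : SPerm) : ℕ := lenX XType.B w

/-- The polynomial ring `ℤ[β][x_1,x_2,...,y_1,y_2,...]`:  the variable
`Sum.inl i` is `x_i` and `Sum.inr i` is `y_i` (for `i ≥ 1`; index 0 unused). -/
abbrev MvP := MvPolynomial (ℕ ⊕ ℕ) PolyB

def xV (i : ℕ) : MvP := MvPolynomial.X (Sum.inl i)
def yV (i : ℕ) : MvP := MvPolynomial.X (Sum.inr i)
def βM : MvP := MvPolynomial.C Polynomial.X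

/-- `w` is the reverse permutation `n ⋯ 3 2 1 ∈ S_n`. -/
def IsRevA (n : ℕ) (w : SPerm) : Prop :=
  IsAperm w ∧ (∀ i : ℤ, 1 ≤ i → i ≤ (n : ℤ) → w i = (n : ℤ) + 1 - i) ∧
  (∀ i : ℤ, (n : ℤ) < i → w i = i)

/-- Exchange of the variables `x_i` and `x_{i+1}`. -/
def swapXvar (i : ℕ) (f : MvP) : MvP :=
  MvPolynomial.rename (Equiv.swap (Sum.inl i : ℕ ⊕ ℕ) (Sum.inl (i+1))) f

/-- `G` is the family of double Grothendieck polynomials `𝔊_w(x;y)`: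
it takes the prescribed product value on each reverse permutation, and
satisfies the divided-difference recursion `𝔊_{w s_i} = π_i 𝔊_w` whenever
`w(i) > w(i+1)` (stated multiplied through by `x_i - x_{i+1}`). -/
def GrothFamily (G : SPerm → MvP) : Prop :=
  (∀ n : ℕ, ∀ w : SPerm, IsRevA n w →
    G w = ∏ p ∈ Finset.filter
        (fun p : ℕ × ℕ => 1 ≤ p.1 ∧ 1 ≤ p.2 ∧ p.1 + p.2 ≤ n)
        (Finset.range (n+1) ×ˢ Finset.range (n+1)),
      (xV p.1 + yV p.2 + βM * xV p.1 * yV p.2)) ∧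
  (∀ w : SPerm, IsAperm w → ∀ i : ℕ, 0 < i → w ((i : ℤ) + 1) < w (i : ℤ) →
    (xV i - xV (i+1)) * G (w * st (i : ℤ)) =
      (1 + βM * xV (i+1)) * G w - (1 + βM * xV i) * swapXvar i (G w))

/-! ## Power series rings -/

/-- `ℤ[β]⟦z⟧`. -/
abbrev PS1 := MvPowerSeries ℕ PolyB
/-- `ℤ[β]⟦x;y⟧`: `Sum.inl i = x_i`, `Sum.inr i = y_i`. -/
abbrev PS2 := MvPowerSeries (ℕ ⊕ ℕ) PolyB
/-- `ℤ[β]⟦x;y;z⟧`: `Sum.inl i = x_i`, `Sum.inr (Sum.inl i) = y_i`,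
`Sum.inr (Sum.inr i) = z_i`. -/
abbrev PS3 := MvPowerSeries (ℕ ⊕ ℕ ⊕ ℕ) PolyB

/-- Renaming of variables of a formal power series along a (variable-to-
variable, injective) map `g`. -/
def renamePS {σ τ : Type} (g : σ → τ) (f : MvPowerSeries σ PolyB) :
    MvPowerSeries τ PolyB :=
  fun e => if h : ∃ d : σ →₀ ℕ, Finsupp.mapDomain g d = e then f h.choose else 0

/-- The substitution sending `z_{2i-1}` to `z_i` (first alphabet) and
`z_{2i}` to `z'_i` (second alphabet): evaluation at the disjoint union of two
alphabets. -/
def dblVar : ℕ → ℕ ⊕ ℕ := fun k => if k % 2 = 1 then Sum.inl ((k+1)/2) else Sum.inr (k/2)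

def toPS2 : MvP →+* PS2 := MvPolynomial.coeToMvPowerSeries.ringHom
def X2 (i : ℕ) : PS2 := MvPowerSeries.X (Sum.inl i)
def Y2 (i : ℕ) : PS2 := MvPowerSeries.X (Sum.inr i)
def βC2 : PS2 := MvPowerSeries.C (σ := ℕ ⊕ ℕ) (R := PolyB) Polynomial.X
/-- The inverse of `1 + β y_m` in `ℤ[β]⟦x;y⟧`. -/
def yInv2 (m : ℕ) : PS2 := MvPowerSeries.invOfUnit (1 + βC2 * Y2 m) 1

def X3 (i : ℕ) : PS3 := MvPowerSeries.X (Sum.inl i)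
def Y3 (i : ℕ) : PS3 := MvPowerSeries.X (Sum.inr (Sum.inl i))
def βC3 : PS3 := MvPowerSeries.C (σ := ℕ ⊕ ℕ ⊕ ℕ) (R := PolyB) Polynomial.X
/-- The inverse of `1 + β y_m` in `ℤ[β]⟦x;y;z⟧`. -/
def yInv3 (m : ℕ) : PS3 := MvPowerSeries.invOfUnit (1 + βC3 * Y3 m) 1

/-- `y_c` for `c : ℤ`, with the convention `y_{-m} = -y_m/(1+βy_m)`. -/
def y3Of (c : ℤ) : PS3 :=
  if 0 ≤ c then Y3 c.toNat else - Y3 (-c).toNat * yInv3 (-c).toNat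

/-- `(1 + β y_c)⁻¹` for `c : ℤ` (with the convention above for `c < 0`). -/
def oneByInv3 (c : ℤ) : PS3 := MvPowerSeries.invOfUnit (1 + βC3 * y3Of c) 1

/-! ## Kirillov–Naruse double Grothendieck polynomials -/

/-- `𝔊_σ(y)`: the `x`-variables replaced by `y`'s, the `y`-variables set
to `0`, inside `ℤ[β]⟦x;y;z⟧`. -/
def GyMap : MvP →+* PS3 :=
  MvPolynomial.eval₂Hom (MvPowerSeries.C (σ := ℕ ⊕ ℕ ⊕ ℕ) (R := PolyB))
    (fun s => match s with
      | Sum.inl i => Y3 i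
      | Sum.inr _ => 0)

/-- `𝔊_τ(x)`: the `y`-variables set to `0`, inside `ℤ[β]⟦x;y;z⟧`. -/
def GxMap : MvP →+* PS3 :=
  MvPolynomial.eval₂Hom (MvPowerSeries.C (σ := ℕ ⊕ ℕ ⊕ ℕ) (R := PolyB))
    (fun s => match s with
      | Sum.inl i => X3 i
      | Sum.inr _ => 0)

/-- Embedding of `ℤ[β]⟦z⟧` into `ℤ[β]⟦x;y;z⟧`. -/
def zEmb (f : PS1) : PS3 := renamePS (fun k => Sum.inr (Sum.inr k)) f

/-- `σ⁻¹ ∘ u ∘ τ = w` for the Demazure product of `W^X_∞` (computed by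
folding Hecke words for `u` and `τ` starting from `σ⁻¹`; the result does not
depend on the chosen words). -/
def DemTriple (X : XType) (sg u tu w : SPerm) : Prop :=
  ∃ lu lt : List ℤ, HeckeWord X u lu ∧ HeckeWord X tu lt ∧
    demFold X sg⁻¹ (lu ++ lt) = w

/-- The Kirillov–Naruse double Grothendieck polynomial
`𝔊^X_w(x;y;z) = Σ_{σ⁻¹∘u∘τ = w} β^{ℓ(σ)+ℓ^X(u)+ℓ(τ)-ℓ^X(w)} 𝔊_σ(y) F^X_u(z) 𝔊_τ(x)`,
defined coefficientwise (each coefficient receives finitely many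
contributions); it depends on a choice `G` of the family of type A double
Grothendieck polynomials. -/
def KN (X : XType) (G : SPerm → MvP) (w : SPerm) : PS3 :=
  fun e => ∑ᶠ (t : SPerm × SPerm × SPerm)
    (_ : IsAperm t.1 ∧ IsW X t.2.1 ∧ IsAperm t.2.2 ∧ DemTriple X t.1 t.2.1 t.2.2 w),
    MvPowerSeries.coeff (R := PolyB) e
      (MvPowerSeries.C (σ := ℕ ⊕ ℕ ⊕ ℕ) (R := PolyB)
          (Polynomial.X ^ (lenA t.1 + lenX X t.2.1 + lenA t.2.2 - lenX X w)) *
        (GyMap (G t.1) * zEmb (KSF X t.2.1) * GxMap (G t.2.2)))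

end

/-! ## Stable Grothendieck functions of type A -/

section

/-- A type A Hecke word: letters are positive, fold to `w` under the
Demazure product. -/
def HeckeWordA (w : SPerm) (l : List ℤ) : Prop :=
  (∀ a ∈ l, 0 < a) ∧ demFold XType.B 1 l = w

/-- `b ∈ C(a)`: compatible sequences of type A. -/
def CompatA (a : List ℤ) (b : List ℕ) : Prop :=
  b.length = a.length ∧ (∀ x ∈ b, 0 < x) ∧ b.Pairwise (· ≤ ·) ∧
  ∀ i : ℕ, i + 1 < a.length → a.getD i 0 ≤ a.getD (i+1) 0 →
    b.getD i 0 < b.getD (i+1) 0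

/-- The stable (symmetric) Grothendieck function `G_w(z)`. -/
def GA (w : SPerm) : PS1 :=
  fun d => ∑ᶠ (p : List ℤ × List ℕ)
    (_ : HeckeWordA w p.1 ∧ CompatA p.1 p.2 ∧ ∀ k : ℕ, d k = p.2.count k),
    (Polynomial.X : PolyB) ^ (p.1.length - lenA w)

/-- Demazure product condition `u ∘ v = w` in `S_∞`. -/
def DemPairA (u v w : SPerm) : Prop :=
  ∃ lv : List ℤ, HeckeWordA v lv ∧ demFold XType.B u lv = w

/-- `max({0} ∪ {i > 0 : u(i) ≠ i})`. -/
def suppMax (u : SPerm) : ℕ := sSup {n : ℕ | 0 < n ∧ u (n : ℤ) ≠ (n : ℤ)}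

end

/-! ## The coefficient ring 𝔸 (localization of ℤ[β][y] at the 1+βyᵢ) -/

section

/-- `ℤ[β][y_1,y_2,...]`. -/
abbrev Ry := MvPolynomial ℕ+ PolyB

/-- The multiplicative set generated by the `1 + β y_i`, `i ≥ 1`. -/
def Sy : Submonoid Ry :=
  Submonoid.closure
    (Set.range fun i : ℕ+ => (1 + MvPolynomial.C Polynomial.X * MvPolynomial.X i : Ry))

/-- The ring `𝔸`. -/
abbrev Aloc := Localization Sy

/-- The polynomial ring `𝔸[x_1,x_2,...]`. -/
abbrev Ax := MvPolynomial ℕ+ Aloc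

/-- The canonical map `ℤ[β][x;y] → 𝔸[x]`. -/
def toAx : MvP →+* Ax :=
  MvPolynomial.eval₂Hom
    ((MvPolynomial.C : Aloc →+* Ax).comp
      ((algebraMap Ry Aloc).comp (MvPolynomial.C : PolyB →+* Ry)))
    (fun s => match s with
      | Sum.inl i => if h : 0 < i then MvPolynomial.X (⟨i, h⟩ : ℕ+) else 0
      | Sum.inr i => if h : 0 < i then
          MvPolynomial.C (algebraMap Ry Aloc (MvPolynomial.X (⟨i, h⟩ : ℕ+))) else 0)

/-- Homogeneity in `ℤ[β][y]` for the grading `deg β = -1`, `deg y_i = 1`. -/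
def IsHomogRy (p : Ry) (d : ℤ) : Prop :=
  ∀ (m : ℕ+ →₀ ℕ) (a : ℕ), (MvPolynomial.coeff m p).coeff a ≠ 0 →
    (m.sum fun _ e => (e : ℤ)) - (a : ℤ) = d

/-- Homogeneity in `𝔸` of degree `d`: the element can be written with a
homogeneous numerator of degree `d` and a (degree zero) denominator in `Sy`. -/
def IsHomogA (x : Aloc) (d : ℤ) : Prop :=
  ∃ (p : Ry) (s : Sy), IsHomogRy p d ∧ IsHomogRy (s : Ry) 0 ∧
    x * algebraMap Ry Aloc (s : Ry) = algebraMap Ry Aloc p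

/-- The subring `𝔸^{(n)}` generated by `β`, by `y_1,…,y_{n-1}` and by the
inverses of `1+βy_1,…,1+βy_{n-1}`. -/
def AnSub (n : ℕ) : Subring Aloc :=
  Subring.closure
    ({algebraMap Ry Aloc (MvPolynomial.C Polynomial.X)} ∪
     {x | ∃ i : ℕ+, (i : ℕ) < n ∧ x = algebraMap Ry Aloc (MvPolynomial.X i)} ∪
     {x | ∃ i : ℕ+, (i : ℕ) < n ∧
        x * algebraMap Ry Aloc
          (1 + MvPolynomial.C Polynomial.X * MvPolynomial.X i : Ry) = 1})

end

/-! ## Transition chains -/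

section

/-- The list of reflections of a transition chain `γ = (δ; j_1 < ⋯ < j_r)`
with target column `k`: first (if `δ`) the reflection `t_{0,k}`, then the
reflections `t_{j_1,k}, …, t_{j_r,k}`. -/
def stepsR (k : ℕ) (γ : Bool × List ℤ) : List SPerm :=
  (if γ.1 then [tt 0 (k : ℤ)] else []) ++ γ.2.map (fun j => tt j (k : ℤ))

/-- Validity of the transition chain `γ = (δ; j_1 < ⋯ < j_r)` starting at
`w`, with target column `k`: `δ` only in type B, `j`'s increasing and `< k`,
`j_i ≠ -k`, `j_i ≠ 0` in type D, and each step increases `ℓ^X` by one. -/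
def chainValidR (X : XType) (w : SPerm) (k : ℕ) (γ : Bool × List ℤ) : Prop :=
  (γ.1 = true → X = XType.B) ∧ γ.2.Pairwise (· < ·) ∧
  (∀ j ∈ γ.2, j < (k : ℤ) ∧ j ≠ -(k : ℤ) ∧ (X = XType.D → j ≠ 0)) ∧
  IncSteps (lenX X) w (stepsR k γ)

/-- The endpoint of a chain. -/
def endR (w : SPerm) (k : ℕ) (γ : Bool × List ℤ) : SPerm := w * (stepsR k γ).prod

/-- The number of steps `δ + r` of a chain. -/
def lenR (γ : Bool × List ℤ) : ℕ := (if γ.1 then 1 else 0) + γ.2.length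

end

/-! ## Unimodal factorizations -/

section

/-- `b ∈ U(a)`: unimodal factorizations of the word `a`. -/
def UFact (a b : List ℤ) : Prop :=
  b.length = a.length ∧ (∀ x ∈ b, x ≠ 0) ∧
  b.Pairwise (fun m n => |m| < |n| ∨ (|m| = |n| ∧ m ≤ n)) ∧
  ∀ i : ℕ, i + 1 < b.length → b.getD i 0 = b.getD (i+1) 0 →
    (b.getD i 0 < 0 → |a.getD (i+1) 0| < |a.getD i 0|) ∧
    (0 < b.getD i 0 → |a.getD i 0| < |a.getD (i+1) 0|)

/-- `b ∈ U^X(a)`. -/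
def UFactX (X : XType) (a b : List ℤ) : Prop :=
  UFact a b ∧
  (X = XType.B → ∀ i : ℕ, i < b.length → a.getD i 0 = 0 → 0 < b.getD i 0) ∧
  (X = XType.D → ∀ i : ℕ, i < b.length →
    (a.getD i 0 = -1 ∨ a.getD i 0 = 1) → 0 < b.getD i 0)

end

/-! ## Reading words of skew shifted shapes -/

section

/-- The row-by-row reading word of the filling of `SD_{lam/mu}` placing
`j - i` in box `(i,j)`. -/
def aWord (lam mu : List ℕ) : List ℤ :=
  (List.range lam.length).flatMap (fun r =>
    (List.range (lam.getD r 0 - mu.getD r 0)).map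
      (fun s => ((mu.getD r 0 + s : ℕ) : ℤ)))

/-- The row-by-row reading word of the filling of `SD_{lam/mu}` placing
`j - i + 1` in each box `(i,j)` with `i ≠ j` and `(-1)^i` in each diagonal
box `(i,i)`. -/
def bWord (lam mu : List ℕ) : List ℤ :=
  (List.range lam.length).flatMap (fun r =>
    (List.range (lam.getD r 0 - mu.getD r 0)).map
      (fun s => if mu.getD r 0 + s = 0 then (-1 : ℤ) ^ (r + 1)
        else ((mu.getD r 0 + s : ℕ) : ℤ) + 1))

end

end
-- chunk 1: basic lemmas
namespace RLL
open Equiv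

lemma mul_apply' (u v : SPerm) (x : ℤ) : (u * v) x = u (v x) := rfl

lemma sgn_zero {w : SPerm} (hw : IsSgn w) : w 0 = 0 := by
  have := hw.1 0; simp at this; omega

lemma IsSgn_mul {u v : SPerm} (hu : IsSgn u) (hv : IsSgn v) : IsSgn (u * v) := by
  constructor
  · intro x; simp [mul_apply', hv.1 x, hu.1 (v x)]
  · apply Set.Finite.subset (hu.2.union hv.2)
    intro x hx
    simp only [Set.mem_setOf_eq, mul_apply'] at hx ⊢
    by_cases h : v x = x
    · left; rwa [h] at hx
    · right; exact h

section tt_lemmas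
variable {i k : ℤ}

lemma tt_eq_swaps (hik : i < k) (hk : 0 < k) (hineg : i ≠ -k) (h0 : i ≠ 0) :
    tt i k = Equiv.swap i k * Equiv.swap (-i) (-k) := by
  have h1 : ¬ (i = k ∨ i = -k) := by push_neg; exact ⟨ne_of_lt hik, hineg⟩
  rw [tt, if_neg h0, if_neg (by omega : ¬ k = 0), if_neg h1]

lemma tt_zero_eq : tt 0 k = Equiv.swap (-k) k := by simp [tt]

lemma tt_apply_fix (hik : i < k) (hk : 0 < k) (hineg : i ≠ -k) (x : ℤ)
    (hx1 : x ≠ i) (hx2 : x ≠ k) (hx3 : x ≠ -i) (hx4 : x ≠ -k) :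
    tt i k x = x := by
  by_cases h0 : i = 0
  · subst h0; rw [tt_zero_eq]
    exact Equiv.swap_apply_of_ne_of_ne hx4 hx2
  · rw [tt_eq_swaps hik hk hineg h0, mul_apply']
    rw [Equiv.swap_apply_of_ne_of_ne hx3 hx4, Equiv.swap_apply_of_ne_of_ne hx1 hx2]

lemma tt_apply_i (hik : i < k) (hk : 0 < k) (hineg : i ≠ -k) (h0 : i ≠ 0) : tt i k i = k := by
  rw [tt_eq_swaps hik hk hineg h0, mul_apply']
  have h1 : Equiv.swap (-i) (-k) i = i := Equiv.swap_apply_of_ne_of_ne (by omega) hineg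
  rw [h1, Equiv.swap_apply_left]

lemma tt_apply_k (hik : i < k) (hk : 0 < k) (hineg : i ≠ -k) (h0 : i ≠ 0) : tt i k k = i := by
  rw [tt_eq_swaps hik hk hineg h0, mul_apply']
  have h1 : Equiv.swap (-i) (-k) k = k :=
    Equiv.swap_apply_of_ne_of_ne (by intro h; exact hineg (by omega)) (by omega)
  rw [h1, Equiv.swap_apply_right]

lemma tt_apply_negi (hik : i < k) (hk : 0 < k) (hineg : i ≠ -k) (h0 : i ≠ 0) :
    tt i k (-i) = -k := by
  rw [tt_eq_swaps hik hk hineg h0, mul_apply', Equiv.swap_apply_left]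
  exact Equiv.swap_apply_of_ne_of_ne (by intro h; exact hineg (by omega)) (by omega)

lemma tt_apply_negk (hik : i < k) (hk : 0 < k) (hineg : i ≠ -k) (h0 : i ≠ 0) :
    tt i k (-k) = -i := by
  rw [tt_eq_swaps hik hk hineg h0, mul_apply', Equiv.swap_apply_right]
  exact Equiv.swap_apply_of_ne_of_ne (by omega) (by intro h; exact hineg (by omega))

lemma IsSgn_tt (hik : i < k) (hk : 0 < k) (hineg : i ≠ -k) : IsSgn (tt i k) := by
  constructor
  · intro x
    by_cases h0 : i = 0
    · subst h0; rw [tt_zero_eq]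
      rcases eq_or_ne x k with rfl | h1
      · simp
      rcases eq_or_ne x (-k) with rfl | h2
      · simp
      · rw [Equiv.swap_apply_of_ne_of_ne (by omega) (by omega),
          Equiv.swap_apply_of_ne_of_ne h2 h1]
    · rcases eq_or_ne x i with rfl | h1
      · rw [tt_apply_negi hik hk hineg h0, tt_apply_i hik hk hineg h0]
      rcases eq_or_ne x k with rfl | h2
      · rw [tt_apply_negk hik hk hineg h0, tt_apply_k hik hk hineg h0]
      rcases eq_or_ne x (-i) with rfl | h3
      · rw [neg_neg, tt_apply_i hik hk hineg h0, tt_apply_negi hik hk hineg h0]; omega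
      rcases eq_or_ne x (-k) with rfl | h4
      · rw [neg_neg, tt_apply_k hik hk hineg h0, tt_apply_negk hik hk hineg h0]; omega
      · rw [tt_apply_fix hik hk hineg x h1 h2 h3 h4,
          tt_apply_fix hik hk hineg (-x) (by omega) (by omega) (by omega) (by omega)]
  · apply Set.Finite.subset
      (((((Set.finite_singleton (-k)).insert (-i)).insert k).insert i))
    intro x hx
    simp only [Set.mem_setOf_eq] at hx
    by_contra hcon
    simp only [Set.mem_insert_iff, Set.mem_singleton_iff] at hcon
    push_neg at hcon
    exact hx (tt_apply_fix hik hk hineg x hcon.1 hcon.2.1 hcon.2.2.1 hcon.2.2.2)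

lemma tt_invol (hik : i < k) (hk : 0 < k) (hineg : i ≠ -k) (x : ℤ) :
    tt i k (tt i k x) = x := by
  by_cases h0 : i = 0
  · subst h0; rw [tt_zero_eq]; simp
  rcases eq_or_ne x i with rfl | h1
  · rw [tt_apply_i hik hk hineg h0, tt_apply_k hik hk hineg h0]
  rcases eq_or_ne x k with rfl | h2
  · rw [tt_apply_k hik hk hineg h0, tt_apply_i hik hk hineg h0]
  rcases eq_or_ne x (-i) with rfl | h3
  · rw [tt_apply_negi hik hk hineg h0, tt_apply_negk hik hk hineg h0]
  rcases eq_or_ne x (-k) with rfl | h4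
  · rw [tt_apply_negk hik hk hineg h0, tt_apply_negi hik hk hineg h0]
  · rw [tt_apply_fix hik hk hineg x h1 h2 h3 h4, tt_apply_fix hik hk hineg x h1 h2 h3 h4]

lemma mul_tt_tt (hik : i < k) (hk : 0 < k) (hineg : i ≠ -k) (w : SPerm) :
    w * tt i k * tt i k = w := by
  ext x; rw [mul_apply', mul_apply', tt_invol hik hk hineg]

end tt_lemmas

lemma window_map {w : SPerm} {M x : ℤ} (hw : ∀ y, M < |y| → w y = y) (hx : |x| ≤ M) :
    |w x| ≤ M := by
  by_contra h
  push_neg at h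
  have h2 := hw (w x) h
  have h3 := w.injective h2
  rw [h3] at h
  omega

end RLL
-- chunk 2: inversion sets and the swap formula
namespace RLL
open Equiv

lemma window_fix {w : SPerm} {M x : ℤ} (hw : ∀ y, M < |y| → w y = y)
    (h : x < -M ∨ M < x) : w x = x :=
  hw x (lt_abs.mpr (by omega))

lemma window_map' {w : SPerm} {M x : ℤ} (hw : ∀ y, M < |y| → w y = y)
    (h1 : -M ≤ x) (h2 : x ≤ M) : -M ≤ w x ∧ w x ≤ M :=
  abs_le.mp (window_map hw (abs_le.mpr ⟨by omega, h2⟩))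

def ISet (w : SPerm) : Set (ℤ × ℤ) := {p | p.1 < p.2 ∧ w p.2 < w p.1}

lemma invP_eq_ncard (w : SPerm) : invP w = (ISet w).ncard := rfl

lemma ISet_subset {w : SPerm} {M : ℤ} (hw : ∀ y, M < |y| → w y = y) :
    ISet w ⊆ Set.Icc (-M) M ×ˢ Set.Icc (-M) M := by
  rintro ⟨x, y⟩ ⟨h1, h2⟩
  simp only [Set.mem_prod, Set.mem_Icc]
  simp only at h1 h2
  have hx : -M ≤ x ∧ x ≤ M := by
    by_contra hx
    rcases (by omega : x < -M ∨ M < x) with h | h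
    · have e1 : w x = x := window_fix hw (Or.inl h)
      rcases (by omega : (-M ≤ y ∧ y ≤ M) ∨ y < -M ∨ M < y) with hy | hy
      · have := window_map' hw hy.1 hy.2
        omega
      · have e2 : w y = y := window_fix hw hy
        omega
    · have e1 : w x = x := window_fix hw (Or.inr h)
      have e2 : w y = y := window_fix hw (Or.inr (by omega))
      omega
  have hy : -M ≤ y ∧ y ≤ M := by
    by_contra hy
    rcases (by omega : y < -M ∨ M < y) with h | h
    · have e2 : w y = y := window_fix hw (Or.inl h)
      have e1 : w x = x := window_fix hw (Or.inl (by omega))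
      omega
    · have e2 : w y = y := window_fix hw (Or.inr h)
      have := window_map' hw hx.1 hx.2
      omega
  exact ⟨hx, hy⟩

lemma ISet_finite {w : SPerm} {M : ℤ} (hw : ∀ y, M < |y| → w y = y) :
    (ISet w).Finite :=
  Set.Finite.subset ((Set.finite_Icc (-M) M).prod (Set.finite_Icc (-M) M)) (ISet_subset hw)

def RSet (a b : ℤ) : Set (ℤ × ℤ) :=
  {p | p.1 < p.2 ∧ Equiv.swap a b p.2 < Equiv.swap a b p.1}

lemma RSet_eq {a b : ℤ} (hab : a < b) :
    RSet a b = (fun y => (a, y)) '' Set.Ioc a b ∪ (fun x => (x, b)) '' Set.Ioo a b := by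
  ext ⟨x, y⟩
  simp only [RSet, Set.mem_setOf_eq, Set.mem_union, Set.mem_image, Set.mem_Ioc, Set.mem_Ioo,
    Prod.mk.injEq]
  constructor
  · rintro ⟨hxy, hs⟩
    rcases eq_or_ne x a with rfl | hxa
    · left; exact ⟨y, ⟨hxy, by
        by_contra hyb
        push_neg at hyb
        have hby : Equiv.swap x b y = y := Equiv.swap_apply_of_ne_of_ne (by omega) (by omega)
        rw [hby, Equiv.swap_apply_left] at hs
        omega⟩, rfl, rfl⟩
    · rcases eq_or_ne y b with rfl | hyb
      · right
        refine ⟨x, ⟨?_, hxy⟩, rfl, rfl⟩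
        by_contra hxa2
        push_neg at hxa2
        have hbx : Equiv.swap a y x = x := Equiv.swap_apply_of_ne_of_ne (by omega) (by omega)
        rw [hbx, Equiv.swap_apply_right] at hs
        omega
      · exfalso
        rcases eq_or_ne x b with rfl | hxb
        · have hya : y ≠ a := by omega
          rw [Equiv.swap_apply_of_ne_of_ne hya hyb, Equiv.swap_apply_right] at hs
          omega
        · rcases eq_or_ne y a with rfl | hya
          · rw [Equiv.swap_apply_left, Equiv.swap_apply_of_ne_of_ne hxa hxb] at hs
            omega
          · rw [Equiv.swap_apply_of_ne_of_ne hya hyb,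
              Equiv.swap_apply_of_ne_of_ne hxa hxb] at hs
            omega
  · rintro (⟨y', ⟨hy1, hy2⟩, hxe, hye⟩ | ⟨x', ⟨hx1, hx2⟩, hxe, hye⟩)
    · subst hxe; subst hye
      refine ⟨hy1, ?_⟩
      rw [Equiv.swap_apply_left]
      rcases eq_or_ne y' b with rfl | hy
      · rw [Equiv.swap_apply_right]; omega
      · rw [Equiv.swap_apply_of_ne_of_ne (by omega) hy]; omega
    · subst hxe; subst hye
      refine ⟨hx2, ?_⟩
      rw [Equiv.swap_apply_right, Equiv.swap_apply_of_ne_of_ne (by omega) (by omega)]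
      omega

lemma RSet_finite {a b : ℤ} (hab : a < b) : (RSet a b).Finite := by
  rw [RSet_eq hab]
  exact ((Set.finite_Ioc a b).image _).union ((Set.finite_Ioo a b).image _)

lemma RSet_ncard {a b : ℤ} (hab : a < b) :
    (RSet a b).ncard = (b - a).toNat + (b - a - 1).toNat := by
  rw [RSet_eq hab]
  have hdis : Disjoint ((fun y => (a, y)) '' Set.Ioc a b) ((fun x => (x, b)) '' Set.Ioo a b) := by
    rw [Set.disjoint_left]
    rintro p ⟨y', hy', rfl⟩ ⟨x', hx', heq⟩
    have : x' = a := congrArg Prod.fst heq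
    rw [this] at hx'
    exact absurd hx'.1 (lt_irrefl a)
  rw [Set.ncard_union_eq hdis ((Set.finite_Ioc a b).image _) ((Set.finite_Ioo a b).image _)]
  have inj1 : Function.Injective (fun y : ℤ => (a, y)) := by
    intro u v h; simpa using h
  have inj2 : Function.Injective (fun x : ℤ => (x, b)) := by
    intro u v h; simpa [Prod.ext_iff] using h
  rw [Set.ncard_image_of_injective _ inj1, Set.ncard_image_of_injective _ inj2]
  rw [← Finset.coe_Ioc, ← Finset.coe_Ioo, Set.ncard_coe_finset, Set.ncard_coe_finset,
    Int.card_Ioc, Int.card_Ioo]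

end RLL
-- chunk 3: exact swap formula and intersection bound
namespace RLL
open Equiv

lemma invP_mul_swap (u : SPerm) {M a b : ℤ} (hu : ∀ x, M < |x| → u x = x)
    (ha1 : -M ≤ a) (ha2 : a ≤ M) (hb1 : -M ≤ b) (hb2 : b ≤ M) (hab : a < b) :
    invP (u * Equiv.swap a b) + 2 * ((ISet u) ∩ RSet a b).ncard
      = invP u + ((b - a).toNat + (b - a - 1).toNat) := by
  set σ := Equiv.swap a b with hσ
  set v := u * σ with hv
  have hvx : ∀ x, v x = u (σ x) := fun x => rfl
  have hσσ : ∀ x, σ (σ x) = x := fun x => Equiv.swap_apply_self a b x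
  have hwv : ∀ x, M < |x| → v x = x := by
    intro x hx
    have hx' : M < x ∨ M < -x := lt_abs.mp hx
    have hfix : σ x = x := Equiv.swap_apply_of_ne_of_ne (by omega) (by omega)
    rw [hvx, hfix]
    exact hu x hx
  have claim1 : ISet v \ RSet a b = (fun p : ℤ × ℤ => (σ p.1, σ p.2)) '' (ISet u \ RSet a b) := by
    ext ⟨x, y⟩
    simp only [ISet, RSet, Set.mem_diff, Set.mem_setOf_eq, Set.mem_image, Prod.mk.injEq]
    constructor
    · rintro ⟨⟨h1, h2⟩, h3⟩
      rw [hvx, hvx] at h2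
      have hord : σ x < σ y := by
        rcases lt_trichotomy (σ x) (σ y) with h | h | h
        · exact h
        · exact absurd (σ.injective h) (by omega)
        · exact absurd ⟨h1, h⟩ h3
      refine ⟨(σ x, σ y), ⟨⟨hord, h2⟩, ?_⟩, hσσ x, hσσ y⟩
      rintro ⟨-, hbad⟩
      simp only [hσ, Equiv.swap_apply_self] at hbad
      omega
    · rintro ⟨⟨px, py⟩, ⟨⟨h1, h2⟩, h3⟩, hxe, hye⟩
      simp only at hxe hye h1 h2 h3
      subst hxe; subst hye
      have hord : σ px < σ py := by
        rcases lt_trichotomy (σ px) (σ py) with h | h | h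
        · exact h
        · exact absurd (σ.injective h) (by omega)
        · exact absurd ⟨h1, h⟩ h3
      refine ⟨⟨hord, ?_⟩, ?_⟩
      · rw [hvx, hvx, hσσ, hσσ]; exact h2
      · rintro ⟨-, hbad⟩
        simp only [hσ, Equiv.swap_apply_self] at hbad
        omega
  have claim2 : ISet v ∩ RSet a b = (fun p : ℤ × ℤ => (σ p.2, σ p.1)) '' (RSet a b \ ISet u) := by
    ext ⟨x, y⟩
    simp only [ISet, RSet, Set.mem_inter_iff, Set.mem_diff, Set.mem_setOf_eq, Set.mem_image,
      Prod.mk.injEq]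
    constructor
    · rintro ⟨⟨h1, h2⟩, ⟨-, h3⟩⟩
      rw [hvx, hvx] at h2
      refine ⟨(σ y, σ x), ⟨⟨h3, by simp only [hσ, Equiv.swap_apply_self]; exact h1⟩, ?_⟩, hσσ x, hσσ y⟩
      rintro ⟨-, hbad⟩
      simp only at hbad
      omega
    · rintro ⟨⟨px, py⟩, ⟨⟨h1, h2⟩, h3⟩, hxe, hye⟩
      simp only [hσσ] at h2
      simp only at hxe hye
      subst hxe; subst hye
      have hval : ¬ u py < u px := fun hc => h3 ⟨h1, hc⟩
      refine ⟨⟨h2, ?_⟩, h2, ?_⟩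
      · rw [hvx, hvx, hσσ, hσσ]
        rcases lt_trichotomy (u px) (u py) with h | h | h
        · exact h
        · exact absurd (u.injective h) (by omega)
        · exact absurd h hval
      · simp only [hσ, Equiv.swap_apply_self]; exact h1
  have hIu : (ISet u).Finite := ISet_finite hu
  have hIv : (ISet v).Finite := ISet_finite hwv
  have hR : (RSet a b).Finite := RSet_finite hab
  have inj1 : Function.Injective (fun p : ℤ × ℤ => (σ p.1, σ p.2)) := by
    intro p q h
    simp only [Prod.mk.injEq] at h
    exact Prod.ext (σ.injective h.1) (σ.injective h.2)
  have inj2 : Function.Injective (fun p : ℤ × ℤ => (σ p.2, σ p.1)) := by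
    intro p q h
    simp only [Prod.mk.injEq] at h
    exact Prod.ext (σ.injective h.2) (σ.injective h.1)
  have e1 : (ISet v ∩ RSet a b).ncard + (ISet v \ RSet a b).ncard = (ISet v).ncard :=
    Set.ncard_inter_add_ncard_diff_eq_ncard _ _ hIv
  have e2 : (ISet u ∩ RSet a b).ncard + (ISet u \ RSet a b).ncard = (ISet u).ncard :=
    Set.ncard_inter_add_ncard_diff_eq_ncard _ _ hIu
  have e3 : (RSet a b ∩ ISet u).ncard + (RSet a b \ ISet u).ncard = (RSet a b).ncard :=
    Set.ncard_inter_add_ncard_diff_eq_ncard _ _ hR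
  have c1 : (ISet v \ RSet a b).ncard = (ISet u \ RSet a b).ncard := by
    rw [claim1, Set.ncard_image_of_injective _ inj1]
  have c2 : (ISet v ∩ RSet a b).ncard = (RSet a b \ ISet u).ncard := by
    rw [claim2, Set.ncard_image_of_injective _ inj2]
  have ecomm : (RSet a b ∩ ISet u).ncard = (ISet u ∩ RSet a b).ncard := by
    rw [Set.inter_comm]
  have eR := RSet_ncard hab
  rw [invP_eq_ncard, invP_eq_ncard]
  omega

lemma inter_bound (u : SPerm) {a b : ℤ} (hab : a < b) (hval : u a < u b) :
    (ISet u ∩ RSet a b).ncard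
      + ((Finset.Ioo a b).filter (fun j => u a < u j ∧ u j < u b)).card
      ≤ (b - a - 1).toNat := by
  classical
  set f1 := (Finset.Ioo a b).filter (fun y => u y < u a) with hf1
  set f2 := (Finset.Ioo a b).filter (fun x => u b < u x) with hf2
  set f3 := (Finset.Ioo a b).filter (fun j => u a < u j ∧ u j < u b) with hf3
  have hchar : ISet u ∩ RSet a b
      = (fun y => (a, y)) '' (↑f1 : Set ℤ) ∪ (fun x => (x, b)) '' (↑f2 : Set ℤ) := by
    rw [RSet_eq hab]
    ext ⟨x, y⟩
    simp only [ISet, Set.mem_inter_iff, Set.mem_union, Set.mem_setOf_eq, Set.mem_image,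
      Finset.coe_filter, Finset.mem_Ioo, Set.mem_Ioc, Set.mem_Ioo, Prod.mk.injEq, hf1, hf2]
    constructor
    · rintro ⟨⟨h1, h2⟩, (⟨y', ⟨hy1, hy2⟩, hxe, hye⟩ | ⟨x', ⟨hx1, hx2⟩, hxe, hye⟩)⟩
      · subst hxe; subst hye
        left
        refine ⟨y', ⟨⟨hy1, ?_⟩, h2⟩, rfl, rfl⟩
        rcases eq_or_ne y' b with rfl | h
        · exact absurd h2 (by omega)
        · omega
      · subst hxe; subst hye
        right
        exact ⟨x', ⟨⟨hx1, hx2⟩, h2⟩, rfl, rfl⟩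
    · rintro (⟨y', ⟨⟨hy1, hy2⟩, hy3⟩, hxe, hye⟩ | ⟨x', ⟨⟨hx1, hx2⟩, hx3⟩, hxe, hye⟩)
      · subst hxe; subst hye
        exact ⟨⟨hy1, hy3⟩, Or.inl ⟨y', ⟨hy1, by omega⟩, rfl, rfl⟩⟩
      · subst hxe; subst hye
        exact ⟨⟨hx2, hx3⟩, Or.inr ⟨x', ⟨hx1, hx2⟩, rfl, rfl⟩⟩
  have hdis : Disjoint ((fun y => (a, y)) '' (↑f1 : Set ℤ)) ((fun x => (x, b)) '' (↑f2 : Set ℤ)) := by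
    rw [Set.disjoint_left]
    rintro p ⟨y', hy', rfl⟩ ⟨x', hx', heq⟩
    have hx : x' = a := congrArg Prod.fst heq
    rw [hx] at hx'
    simp only [Finset.coe_filter, Set.mem_setOf_eq, Finset.mem_Ioo, hf2] at hx'
    exact absurd hx'.1.1 (lt_irrefl a)
  have inj1 : Function.Injective (fun y : ℤ => (a, y)) := by
    intro p q h; simpa using h
  have inj2 : Function.Injective (fun x : ℤ => (x, b)) := by
    intro p q h; simpa [Prod.ext_iff] using h
  have hcard : (ISet u ∩ RSet a b).ncard = f1.card + f2.card := by
    rw [hchar, Set.ncard_union_eq hdis (f1.finite_toSet.image _) (f2.finite_toSet.image _),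
      Set.ncard_image_of_injective _ inj1, Set.ncard_image_of_injective _ inj2,
      Set.ncard_coe_finset, Set.ncard_coe_finset]
  have hd12 : Disjoint f1 f2 := by
    rw [Finset.disjoint_left]
    intro j h1 h2
    simp only [Finset.mem_filter, hf1, hf2] at h1 h2
    omega
  have hd13 : Disjoint (f1 ∪ f2) f3 := by
    rw [Finset.disjoint_left]
    intro j h1 h2
    simp only [Finset.mem_union, Finset.mem_filter, hf1, hf2, hf3] at h1 h2
    omega
  have hsub : (f1 ∪ f2) ∪ f3 ⊆ Finset.Ioo a b := by
    intro j hj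
    simp only [Finset.mem_union, Finset.mem_filter, hf1, hf2, hf3] at hj
    rcases hj with (h | h) | h <;> exact h.1
  have := Finset.card_le_card hsub
  rw [Finset.card_union_of_disjoint hd13, Finset.card_union_of_disjoint hd12, Int.card_Ioo] at this
  omega

end RLL
-- chunk 4: parity structure and negCount lemmas
namespace RLL
open Equiv

lemma even_card_invol_aux {α : Type} [DecidableEq α] (n : ℕ) :
    ∀ (s : Finset α) (f : α → α), s.card ≤ n →
      (∀ a ∈ s, f a ∈ s) → (∀ a ∈ s, f (f a) = a) → (∀ a ∈ s, f a ≠ a) →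
      Even s.card := by
  induction n with
  | zero =>
    intro s f h _ _ _
    simp [Nat.le_zero.mp h]
  | succ n ih =>
    intro s f hc h1 h2 h3
    rcases s.eq_empty_or_nonempty with rfl | ⟨a, ha⟩
    · simp
    set s' := (s.erase a).erase (f a) with hs'
    have hfa : f a ∈ s := h1 a ha
    have hne : f a ≠ a := h3 a ha
    have h2le : 2 ≤ s.card := Finset.one_lt_card.mpr ⟨a, ha, f a, hfa, Ne.symm hne⟩
    have hcard : s'.card + 2 = s.card := by
      rw [hs', Finset.card_erase_of_mem (Finset.mem_erase.mpr ⟨hne, hfa⟩),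
        Finset.card_erase_of_mem ha]
      omega
    have hmem : ∀ x, x ∈ s' ↔ x ≠ f a ∧ x ≠ a ∧ x ∈ s := by
      intro x
      rw [hs', Finset.mem_erase, Finset.mem_erase]
    have h1' : ∀ x ∈ s', f x ∈ s' := by
      intro x hx
      rw [hmem] at hx ⊢
      obtain ⟨hx1, hx2, hx3⟩ := hx
      refine ⟨?_, ?_, h1 x hx3⟩
      · intro h
        exact hx2 (by rw [← h2 x hx3, h, h2 a ha])
      · intro h
        exact hx1 (by rw [← h2 x hx3, h])
    have h2' : ∀ x ∈ s', f (f x) = x := fun x hx => h2 x ((hmem x).mp hx).2.2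
    have h3' : ∀ x ∈ s', f x ≠ x := fun x hx => h3 x ((hmem x).mp hx).2.2
    have hev := ih s' f (by omega) h1' h2' h3'
    have : s.card = s'.card + 2 := hcard.symm
    rw [this]
    exact hev.add (by norm_num)

lemma even_card_invol {α : Type} [DecidableEq α] (s : Finset α) (f : α → α)
    (h1 : ∀ a ∈ s, f a ∈ s) (h2 : ∀ a ∈ s, f (f a) = a) (h3 : ∀ a ∈ s, f a ≠ a) :
    Even s.card :=
  even_card_invol_aux s.card s f le_rfl h1 h2 h3

def NSet (w : SPerm) : Set ℤ := {i : ℤ | 0 < i ∧ w i < 0}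

lemma negCount_eq_ncard (w : SPerm) : negCount w = (NSet w).ncard := rfl

lemma NSet_finite {w : SPerm} {M : ℤ} (hw : ∀ y, M < |y| → w y = y) :
    (NSet w).Finite := by
  apply Set.Finite.subset (Set.finite_Icc 1 M)
  rintro x ⟨hx1, hx2⟩
  simp only [Set.mem_Icc]
  constructor
  · omega
  · by_contra h
    push_neg at h
    have := window_fix hw (Or.inr h)
    omega

lemma invP_struct {w : SPerm} {M : ℤ} (hsgn : IsSgn w) (hw : ∀ y, M < |y| → w y = y) :
    ∃ e, invP w = negCount w + 2 * e := by
  classical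
  have hI : (ISet w).Finite := ISet_finite hw
  set F := hI.toFinset with hF
  have hmemF : ∀ p, p ∈ F ↔ p ∈ ISet w := fun p => Set.Finite.mem_toFinset hI
  set Ffix := F.filter (fun p : ℤ × ℤ => p.1 = -p.2) with hFfix
  set Fmove := F.filter (fun p : ℤ × ℤ => ¬ p.1 = -p.2) with hFmove
  have hsplit : Ffix.card + Fmove.card = F.card := Finset.card_filter_add_card_filter_not _
  -- Fmove has even cardinality
  have hmove : Even Fmove.card := by
    apply even_card_invol Fmove (fun p => (-p.2, -p.1))
    · rintro ⟨x, y⟩ hp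
      simp only [hFmove, Finset.mem_filter, hmemF, ISet, Set.mem_setOf_eq] at hp ⊢
      obtain ⟨⟨h1, h2⟩, h3⟩ := hp
      refine ⟨⟨by omega, ?_⟩, by intro hcon; omega⟩
      rw [hsgn.1, hsgn.1]
      omega
    · rintro ⟨x, y⟩ _
      simp
    · rintro ⟨x, y⟩ hp
      simp only [hFmove, Finset.mem_filter] at hp
      simp only [Prod.mk.injEq, ne_eq]
      intro h
      exact hp.2 (by omega)
  -- Ffix is in bijection with NSet w
  have hfix : (↑Ffix : Set (ℤ × ℤ)) = (fun j => (-j, j)) '' NSet w := by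
    ext ⟨x, y⟩
    simp only [hFfix, Finset.coe_filter, Set.mem_setOf_eq, hmemF, ISet, Set.mem_image, NSet,
      Prod.mk.injEq]
    constructor
    · rintro ⟨⟨h1, h2⟩, h3⟩
      refine ⟨y, ⟨by omega, ?_⟩, by omega, rfl⟩
      have : w x = -(w y) := by rw [h3, hsgn.1]
      omega
    · rintro ⟨j, ⟨hj1, hj2⟩, hxe, hye⟩
      subst hye; subst hxe
      have : w (-j) = -(w j) := hsgn.1 j
      exact ⟨⟨by omega, by omega⟩, rfl⟩
  have hinj : Function.Injective (fun j : ℤ => (-j, j)) := by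
    intro u v h
    simpa using congrArg Prod.snd h
  have hfixcard : Ffix.card = negCount w := by
    rw [← Set.ncard_coe_finset Ffix, hfix, Set.ncard_image_of_injective _ hinj,
      negCount_eq_ncard]
  obtain ⟨e, he⟩ := hmove
  refine ⟨e, ?_⟩
  have hFcard : (ISet w).ncard = F.card := by
    rw [← Set.ncard_coe_finset F, hF, Set.Finite.coe_toFinset]
  rw [invP_eq_ncard, hFcard]
  omega

lemma lenBC_eval {w : SPerm} {e : ℕ} (h : invP w = negCount w + 2 * e) (X : XType)
    (hX : X ≠ XType.D) : lenX X w = negCount w + e := by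
  have harith : invP w + negCount w = 2 * (negCount w + e) := by omega
  cases X with
  | B => show (invP w + negCount w) / 2 = _; rw [harith]; omega
  | C => show (invP w + negCount w) / 2 = _; rw [harith]; omega
  | D => exact absurd rfl hX

lemma lenD_eval {w : SPerm} {e : ℕ} (h : invP w = negCount w + 2 * e) :
    lenX XType.D w = e := by
  show (invP w - negCount w) / 2 = e
  have : invP w - negCount w = 2 * e := by omega
  rw [this]
  omega
end RLL
-- chunk 5: negCount change lemmas
namespace RLL
open Equiv

variable {w : SPerm} {i k M : ℤ}

lemma negCount_tt_pos (w : SPerm) (hik : i < k) (hk : 0 < k) (hineg : i ≠ -k)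
    (hipos : 0 < i) : negCount (w * tt i k) = negCount w := by
  have h0 : i ≠ 0 := by omega
  have hpos : ∀ x : ℤ, 0 < x → 0 < tt i k x := by
    intro x hx
    rcases eq_or_ne x i with rfl | h1
    · rw [tt_apply_i hik hk hineg h0]; omega
    rcases eq_or_ne x k with rfl | h2
    · rw [tt_apply_k hik hk hineg h0]; omega
    · rw [tt_apply_fix hik hk hineg x h1 h2 (by omega) (by omega)]; omega
  have key : NSet (w * tt i k) = (fun x => tt i k x) '' NSet w := by
    ext x
    simp only [NSet, Set.mem_setOf_eq, Set.mem_image, mul_apply']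
    constructor
    · rintro ⟨hx, hwx⟩
      exact ⟨tt i k x, ⟨hpos x hx, hwx⟩, tt_invol hik hk hineg x⟩
    · rintro ⟨y, ⟨hy, hwy⟩, rfl⟩
      exact ⟨hpos y hy, by rw [tt_invol hik hk hineg]; exact hwy⟩
  rw [negCount_eq_ncard, negCount_eq_ncard, key,
    Set.ncard_image_of_injective _ (tt i k).injective]

lemma negCount_tt_neg_same (hsgn : IsSgn w) (hik : i < k) (hk : 0 < k) (hineg : i ≠ -k)
    (hineg2 : i < 0) (hAB : w i < w k) (hnm : ¬ (w i < 0 ∧ 0 < w k)) :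
    negCount (w * tt i k) = negCount w := by
  have h0 : i ≠ 0 := by omega
  have hA0 : w i ≠ 0 := by
    intro h
    have := w.injective (h.trans (sgn_zero hsgn).symm)
    omega
  have hB0 : w k ≠ 0 := by
    intro h
    have := w.injective (h.trans (sgn_zero hsgn).symm)
    omega
  have hprod : (w i < 0 ∧ w k < 0) ∨ (0 < w i ∧ 0 < w k) := by
    by_cases h : w i < 0
    · left
      refine ⟨h, ?_⟩
      by_contra hb
      push_neg at hb
      exact hnm ⟨h, by omega⟩
    · right
      omega
  have hnegk : w (-k) = -(w k) := hsgn.1 k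
  have hnegi : w (-i) = -(w i) := hsgn.1 i
  have key : NSet (w * tt i k) = NSet w := by
    ext x
    simp only [NSet, Set.mem_setOf_eq, mul_apply']
    rcases eq_or_ne x k with rfl | h1
    · rw [tt_apply_k hik hk hineg h0]
      rcases hprod with ⟨ha, hb⟩ | ⟨ha, hb⟩ <;> omega
    rcases eq_or_ne x (-i) with rfl | h2
    · rw [tt_apply_negi hik hk hineg h0]
      rcases hprod with ⟨ha, hb⟩ | ⟨ha, hb⟩ <;> omega
    constructor
    · rintro ⟨hx, hwx⟩
      rw [tt_apply_fix hik hk hineg x (by omega) h1 h2 (by omega)] at hwx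
      exact ⟨hx, hwx⟩
    · rintro ⟨hx, hwx⟩
      rw [tt_apply_fix hik hk hineg x (by omega) h1 h2 (by omega)]
      exact ⟨hx, hwx⟩
  rw [negCount_eq_ncard, negCount_eq_ncard, key]

lemma negCount_tt_neg_mixed (hsgn : IsSgn w) (hw : ∀ y, M < |y| → w y = y)
    (hik : i < k) (hk : 0 < k) (hineg : i ≠ -k)
    (hineg2 : i < 0) (hA : w i < 0) (hB : 0 < w k) :
    negCount (w * tt i k) = negCount w + 2 := by
  have h0 : i ≠ 0 := by omega
  have hnegk : w (-k) = -(w k) := hsgn.1 k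
  have hnegi : w (-i) = -(w i) := hsgn.1 i
  have key : NSet (w * tt i k) = insert k (insert (-i) (NSet w)) := by
    ext x
    simp only [NSet, Set.mem_setOf_eq, mul_apply', Set.mem_insert_iff]
    rcases eq_or_ne x k with rfl | h1
    · rw [tt_apply_k hik hk hineg h0]
      exact ⟨fun _ => Or.inl rfl, fun _ => ⟨hk, hA⟩⟩
    rcases eq_or_ne x (-i) with rfl | h2
    · rw [tt_apply_negi hik hk hineg h0]
      exact ⟨fun _ => Or.inr (Or.inl rfl), fun _ => ⟨by omega, by omega⟩⟩
    constructor
    · rintro ⟨hx, hwx⟩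
      rw [tt_apply_fix hik hk hineg x (by omega) h1 h2 (by omega)] at hwx
      exact Or.inr (Or.inr ⟨hx, hwx⟩)
    · rintro (rfl | rfl | ⟨hx, hwx⟩)
      · exact absurd rfl h1
      · exact absurd rfl h2
      · rw [tt_apply_fix hik hk hineg x (by omega) h1 h2 (by omega)]
        exact ⟨hx, hwx⟩
  have hk_notin : k ∉ insert (-i) (NSet w) := by
    simp only [Set.mem_insert_iff, NSet, Set.mem_setOf_eq]
    push_neg
    exact ⟨by omega, fun _ => by omega⟩
  have hi_notin : (-i) ∉ NSet w := by
    simp only [NSet, Set.mem_setOf_eq]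
    push_neg
    intro _
    omega
  rw [negCount_eq_ncard, negCount_eq_ncard, key,
    Set.ncard_insert_of_notMem hk_notin ((NSet_finite hw).insert _),
    Set.ncard_insert_of_notMem hi_notin (NSet_finite hw)]

lemma negCount_tt_zero (hsgn : IsSgn w) (hw : ∀ y, M < |y| → w y = y)
    (hk : 0 < k) (hB : 0 < w k) :
    negCount (w * tt 0 k) = negCount w + 1 := by
  have hnegk : w (-k) = -(w k) := hsgn.1 k
  have key : NSet (w * tt 0 k) = insert k (NSet w) := by
    ext x
    simp only [NSet, Set.mem_setOf_eq, mul_apply', Set.mem_insert_iff, tt_zero_eq]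
    rcases eq_or_ne x k with rfl | h1
    · rw [Equiv.swap_apply_right]
      exact ⟨fun _ => Or.inl rfl, fun _ => ⟨hk, by omega⟩⟩
    constructor
    · rintro ⟨hx, hwx⟩
      rw [Equiv.swap_apply_of_ne_of_ne (by omega : x ≠ -k) h1] at hwx
      exact Or.inr ⟨hx, hwx⟩
    · rintro (rfl | ⟨hx, hwx⟩)
      · exact absurd rfl h1
      · rw [Equiv.swap_apply_of_ne_of_ne (by omega : x ≠ -k) h1]
        exact ⟨hx, hwx⟩
  have hk_notin : k ∉ NSet w := by
    simp only [NSet, Set.mem_setOf_eq]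
    push_neg
    intro _
    omega
  rw [negCount_eq_ncard, negCount_eq_ncard, key,
    Set.ncard_insert_of_notMem hk_notin (NSet_finite hw)]

end RLL
-- chunk 6: the core length-increase lemma
namespace RLL
open Equiv

lemma window_mul_swap {w : SPerm} {M a b : ℤ} (hw : ∀ x, M < |x| → w x = x)
    (ha1 : -M ≤ a) (ha2 : a ≤ M) (hb1 : -M ≤ b) (hb2 : b ≤ M) :
    ∀ x, M < |x| → (w * Equiv.swap a b) x = x := by
  intro x hx
  have hx' : M < x ∨ M < -x := lt_abs.mp hx
  rw [mul_apply', Equiv.swap_apply_of_ne_of_ne (by omega) (by omega)]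
  exact hw x hx

lemma window_mul_tt {w : SPerm} {M i k : ℤ} (hw : ∀ x, M < |x| → w x = x)
    (hik : i < k) (hk : 0 < k) (hineg : i ≠ -k) (hiM : |i| ≤ M) (hkM : k ≤ M) :
    ∀ x, M < |x| → (w * tt i k) x = x := by
  intro x hx
  have hx' : M < x ∨ M < -x := lt_abs.mp hx
  have hi' : -M ≤ i ∧ i ≤ M := abs_le.mp hiM
  rw [mul_apply',
    tt_apply_fix hik hk hineg x (by omega) (by omega) (by omega) (by omega)]
  exact hw x hx

lemma core (X : XType) (w : SPerm) {M i k : ℤ} (hsgn : IsSgn w)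
    (hw : ∀ x, M < |x| → w x = x) (hiM : |i| ≤ M) (hkM : k ≤ M)
    (hik : i < k) (hk : 0 < k) (hineg : i ≠ -k) (hD : X = XType.D → i ≠ 0)
    (hAB : w i < w k) :
    lenX X w + 1 ≤ lenX X (w * tt i k) ∧
    (lenX X (w * tt i k) = lenX X w + 1 →
      i ≠ 0 ∧ ∀ j, i < j → j < k → ¬(w i < w j ∧ w j < w k)) := by
  classical
  have hi' : -M ≤ i ∧ i ≤ M := abs_le.mp hiM
  have hw0 : w 0 = 0 := sgn_zero hsgn
  have hwt_sgn : IsSgn (w * tt i k) := IsSgn_mul hsgn (IsSgn_tt hik hk hineg)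
  have hwt_win : ∀ x, M < |x| → (w * tt i k) x = x :=
    window_mul_tt hw hik hk hineg hiM hkM
  obtain ⟨e, he⟩ := invP_struct hsgn hw
  obtain ⟨e', he'⟩ := invP_struct hwt_sgn hwt_win
  by_cases h0 : i = 0
  · -- the i = 0 case : length increases by at least 2
    subst h0
    have hXD : X ≠ XType.D := fun h => (hD h) rfl
    rw [hw0] at hAB
    have hteq : w * tt 0 k = w * Equiv.swap (-k) k := by rw [tt_zero_eq]
    have E1 := invP_mul_swap w hw (by omega) (by omega) (by omega) (by omega)
      (by omega : -k < k)
    have hval : w (-k) < w k := by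
      have := hsgn.1 k
      omega
    have B1 := inter_bound w (by omega : -k < k) hval
    have hc : 1 ≤ ((Finset.Ioo (-k) k).filter
        (fun j => w (-k) < w j ∧ w j < w k)).card := by
      apply Finset.card_pos.mpr
      refine ⟨0, Finset.mem_filter.mpr ⟨Finset.mem_Ioo.mpr ⟨by omega, by omega⟩, ?_⟩⟩
      have := hsgn.1 k
      rw [hw0]
      omega
    have hneg : negCount (w * tt 0 k) = negCount w + 1 :=
      negCount_tt_zero hsgn hw hk hAB
    rw [hteq] at he' hneg ⊢
    have hlw : lenX X w = negCount w + e := lenBC_eval he X hXD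
    have hlwt : lenX X (w * Equiv.swap (-k) k) = negCount (w * Equiv.swap (-k) k) + e' :=
      lenBC_eval he' X hXD
    constructor
    · omega
    · intro heq
      exfalso
      omega
  · -- the main case i ≠ 0
    have hA0 : w i ≠ 0 := fun h => h0 (w.injective (h.trans hw0.symm))
    have hB0 : w k ≠ 0 := fun h => (by omega : k ≠ 0) (w.injective (h.trans hw0.symm))
    have hwu : ∀ x, M < |x| → (w * Equiv.swap i k) x = x :=
      window_mul_swap hw (by omega) (by omega) (by omega) (by omega)
    have hu_negk : (w * Equiv.swap i k) (-k) = -(w k) := by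
      rw [mul_apply', Equiv.swap_apply_of_ne_of_ne (by omega) (by omega), hsgn.1 k]
    have hu_negi : (w * Equiv.swap i k) (-i) = -(w i) := by
      rw [mul_apply', Equiv.swap_apply_of_ne_of_ne (by omega) (by omega), hsgn.1 i]
    have hteq : w * tt i k = (w * Equiv.swap i k) * Equiv.swap (-k) (-i) := by
      rw [tt_eq_swaps hik hk hineg h0, Equiv.swap_comm (-i) (-k), mul_assoc]
    have E1 := invP_mul_swap w hw (by omega) (by omega) (by omega) (by omega) hik
    have B1 := inter_bound w hik hAB
    have E2 := invP_mul_swap (w * Equiv.swap i k) hwu (by omega) (by omega) (by omega)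
      (by omega) (by omega : -k < -i)
    have B2 := inter_bound (w * Equiv.swap i k) (by omega : -k < -i)
      (by rw [hu_negk, hu_negi]; omega)
    rw [← hteq] at E2
    set u := w * Equiv.swap i k with hu
    set F1 := (Finset.Ioo i k).filter (fun j => w i < w j ∧ w j < w k) with hF1
    set F2 := (Finset.Ioo (-k) (-i)).filter (fun j => u (-k) < u j ∧ u j < u (-i)) with hF2
    set c1 := F1.card with hc1
    set c2 := F2.card with hc2
    set s : ℕ := (if -i ∈ F1 then 1 else 0) + (if -k ∈ F1 then 1 else 0) with hs
    have hmi_mix : -i ∈ F1 → i < 0 ∧ w i < 0 ∧ 0 < w k := by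
      intro hm
      rw [hF1, Finset.mem_filter, Finset.mem_Ioo] at hm
      have hni : w (-i) = -(w i) := hsgn.1 i
      obtain ⟨⟨hm1, hm2⟩, hm3, hm4⟩ := hm
      rw [hni] at hm3 hm4
      omega
    have hmk_mix : -k ∈ F1 → i < 0 ∧ w i < 0 ∧ 0 < w k := by
      intro hm
      rw [hF1, Finset.mem_filter, Finset.mem_Ioo] at hm
      have hnk : w (-k) = -(w k) := hsgn.1 k
      obtain ⟨⟨hm1, hm2⟩, hm3, hm4⟩ := hm
      rw [hnk] at hm3 hm4
      omega
    have hboth : ¬(-i ∈ F1 ∧ -k ∈ F1) := by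
      rintro ⟨h1, h2⟩
      rw [hF1, Finset.mem_filter, Finset.mem_Ioo] at h1 h2
      omega
    have hC12 : c1 ≤ c2 + s := by
      have hmap : ∀ j ∈ (F1.erase (-i)).erase (-k), -j ∈ F2 := by
        intro j hj
        have hjk : j ≠ -k := (Finset.mem_erase.mp hj).1
        have hji : j ≠ -i := (Finset.mem_erase.mp (Finset.mem_of_mem_erase hj)).1
        have hjF : j ∈ F1 := Finset.mem_of_mem_erase (Finset.mem_of_mem_erase hj)
        rw [hF1, Finset.mem_filter, Finset.mem_Ioo] at hjF
        rw [hF2, Finset.mem_filter, Finset.mem_Ioo, hu_negk, hu_negi]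
        have huj : u (-j) = -(w j) := by
          rw [hu, mul_apply', Equiv.swap_apply_of_ne_of_ne (by omega) (by omega), hsgn.1 j]
        rw [huj]
        omega
      have hinj : ∀ j1 ∈ (F1.erase (-i)).erase (-k), ∀ j2 ∈ (F1.erase (-i)).erase (-k),
          -j1 = -j2 → j1 = j2 := by
        intro j1 _ j2 _ h
        omega
      have hle : ((F1.erase (-i)).erase (-k)).card ≤ c2 :=
        Finset.card_le_card_of_injOn _ hmap hinj
      have e1 : F1.card ≤ (F1.erase (-i)).card + (if -i ∈ F1 then 1 else 0) := by
        by_cases hm : -i ∈ F1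
        · rw [if_pos hm, Finset.card_erase_of_mem hm]
          have : 1 ≤ F1.card := Finset.card_pos.mpr ⟨-i, hm⟩
          omega
        · rw [if_neg hm, Finset.erase_eq_of_notMem hm]
          omega
      have e2 : (F1.erase (-i)).card ≤ ((F1.erase (-i)).erase (-k)).card
          + (if -k ∈ F1 then 1 else 0) := by
        by_cases hm : -k ∈ F1.erase (-i)
        · rw [if_pos (Finset.mem_of_mem_erase hm), Finset.card_erase_of_mem hm]
          have : 1 ≤ (F1.erase (-i)).card := Finset.card_pos.mpr ⟨-k, hm⟩
          omega
        · rw [Finset.erase_eq_of_notMem hm]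
          split <;> omega
      rw [hc1, hs]
      omega
    -- branch on the mixed-sign situation
    by_cases hMix : i < 0 ∧ w i < 0 ∧ 0 < w k
    · -- mixed case
      have hneg : negCount (w * tt i k) = negCount w + 2 :=
        negCount_tt_neg_mixed hsgn hw hik hk hineg hMix.1 hMix.2.1 hMix.2.2
      have h0mem : (0 : ℤ) ∈ F1 := by
        rw [hF1, Finset.mem_filter, Finset.mem_Ioo, hw0]
        exact ⟨⟨by omega, by omega⟩, by omega, by omega⟩
      have hcbig : 1 + s ≤ c1 := by
        by_cases hmi : -i ∈ F1 <;> by_cases hmk : -k ∈ F1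
        · exact absurd ⟨hmi, hmk⟩ hboth
        · have : 1 < F1.card := Finset.one_lt_card.mpr ⟨0, h0mem, -i, hmi, by omega⟩
          rw [hs, if_pos hmi, if_neg hmk, hc1]
          omega
        · have : 1 < F1.card := Finset.one_lt_card.mpr ⟨0, h0mem, -k, hmk, by omega⟩
          rw [hs, if_neg hmi, if_pos hmk, hc1]
          omega
        · have : 1 ≤ F1.card := Finset.card_pos.mpr ⟨0, h0mem⟩
          rw [hs, if_neg hmi, if_neg hmk, hc1]
          omega
      refine ⟨?_, fun heq => ⟨h0, fun j hj1 hj2 hcond => ?_⟩⟩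
      · cases X with
        | B =>
          rw [lenBC_eval he XType.B (by intro h; cases h),
            lenBC_eval he' XType.B (by intro h; cases h)]
          omega
        | C =>
          rw [lenBC_eval he XType.C (by intro h; cases h),
            lenBC_eval he' XType.C (by intro h; cases h)]
          omega
        | D =>
          rw [lenD_eval he, lenD_eval he']
          omega
      · exfalso
        cases X with
        | B =>
          rw [lenBC_eval he XType.B (by intro h; cases h),
            lenBC_eval he' XType.B (by intro h; cases h)] at heq
          omega
        | C =>
          rw [lenBC_eval he XType.C (by intro h; cases h),
            lenBC_eval he' XType.C (by intro h; cases h)] at heq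
          omega
        | D =>
          rw [lenD_eval he, lenD_eval he'] at heq
          omega
    · -- non-mixed case : s = 0 and negCount unchanged
      have hs0 : s = 0 := by
        rw [hs]
        rw [if_neg (fun hm => hMix (hmi_mix hm)), if_neg (fun hm => hMix (hmk_mix hm))]
      have hneg : negCount (w * tt i k) = negCount w := by
        by_cases hipos : 0 < i
        · exact negCount_tt_pos w hik hk hineg hipos
        · apply negCount_tt_neg_same hsgn hik hk hineg (by omega) hAB
          intro hcon
          exact hMix ⟨by omega, hcon.1, hcon.2⟩
      refine ⟨?_, fun heq => ⟨h0, fun j hj1 hj2 hcond => ?_⟩⟩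
      · cases X with
        | B =>
          rw [lenBC_eval he XType.B (by intro h; cases h),
            lenBC_eval he' XType.B (by intro h; cases h)]
          omega
        | C =>
          rw [lenBC_eval he XType.C (by intro h; cases h),
            lenBC_eval he' XType.C (by intro h; cases h)]
          omega
        | D =>
          rw [lenD_eval he, lenD_eval he']
          omega
      · have hjm : j ∈ F1 := by
          rw [hF1, Finset.mem_filter, Finset.mem_Ioo]
          exact ⟨⟨hj1, hj2⟩, hcond⟩
        have hc1pos : 1 ≤ c1 := by
          rw [hc1]
          exact Finset.card_pos.mpr ⟨j, hjm⟩
        exfalso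
        cases X with
        | B =>
          rw [lenBC_eval he XType.B (by intro h; cases h),
            lenBC_eval he' XType.B (by intro h; cases h)] at heq
          omega
        | C =>
          rw [lenBC_eval he XType.C (by intro h; cases h),
            lenBC_eval he' XType.C (by intro h; cases h)] at heq
          omega
        | D =>
          rw [lenD_eval he, lenD_eval he'] at heq
          omega

end RLL
-- chunk 7: the main theorem
open RLL in
theorem reflection_length_lemma' (X : XType) (n : ℕ) (hn : 0 < n)
    (w : SPerm) (hw : IsWn X n w) (i : ℤ) (k : ℕ)
    (hik : i < (k : ℤ)) (hk1 : 1 ≤ k) (hkn : k ≤ n)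
    (hrefl : i ≠ -(k : ℤ) ∧ (X = XType.D → i ≠ 0))
    (hlen : lenX X (w * tt i (k : ℤ)) = lenX X w + 1) :
    IsWn X (n + 1) (w * tt i (k : ℤ)) ∧
    (w * tt i (k : ℤ)) (k : ℤ) < w (k : ℤ) ∧
    DesSet (w * tt i (k : ℤ)) ⊆ DesSet w ∪ {k - 1} ∧
    (¬ IsWn X n (w * tt i (k : ℤ)) →
      i = -(n : ℤ) - 1 ∧
      ∀ j : ℤ, i < j → j < (k : ℤ) → j ≠ -(k : ℤ) → (X = XType.D → j ≠ 0) →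
        lenX X (w * tt i (k : ℤ) * tt j (k : ℤ)) ≠
          lenX X (w * tt i (k : ℤ)) + 1) := by
  have hkZ : (0:ℤ) < (k:ℤ) := by exact_mod_cast hk1
  have hknZ : (k:ℤ) ≤ (n:ℤ) := by exact_mod_cast hkn
  have hinegZ : i ≠ -(k:ℤ) := hrefl.1
  have hsgn : IsSgn w := by
    cases X
    exacts [hw.1, hw.1, hw.1.1]
  have hw0 : w 0 = 0 := sgn_zero hsgn
  have hwn : ∀ x, (n:ℤ) < |x| → w x = x := hw.2
  have habsi : 0 ≤ |i| := abs_nonneg i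
  have hwin : ∀ x, (n:ℤ) + |i| < |x| → w x = x := fun x hx => hwn x (by omega)
  have hiM : |i| ≤ (n:ℤ) + |i| := by omega
  have hkM : (k:ℤ) ≤ (n:ℤ) + |i| := by omega
  have hsgn_t : IsSgn (tt i (k:ℤ)) := IsSgn_tt hik hkZ hinegZ
  have hsgn' : IsSgn (w * tt i (k:ℤ)) := IsSgn_mul hsgn hsgn_t
  have hwin' : ∀ x, (n:ℤ) + |i| < |x| → (w * tt i (k:ℤ)) x = x :=
    window_mul_tt hwin hik hkZ hinegZ hiM hkM
  have hnegk : w (-(k:ℤ)) = -(w (k:ℤ)) := hsgn.1 (k:ℤ)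
  have hnegi : w (-i) = -(w i) := hsgn.1 i
  -- step 1 : w i < w k
  have hAB : w i < w (k:ℤ) := by
    rcases lt_trichotomy (w i) (w (k:ℤ)) with h | h | h
    · exact h
    · exact absurd (w.injective h) (by omega)
    · exfalso
      have hAB' : (w * tt i (k:ℤ)) i < (w * tt i (k:ℤ)) (k:ℤ) := by
        by_cases h0 : i = 0
        · subst h0
          rw [mul_apply', mul_apply', tt_zero_eq, Equiv.swap_apply_right,
            Equiv.swap_apply_of_ne_of_ne (by omega) (by omega), hw0, hnegk]
          omega
        · rw [mul_apply', mul_apply', tt_apply_i hik hkZ hinegZ h0,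
            tt_apply_k hik hkZ hinegZ h0]
          exact h
      have hrev := (core X (w * tt i (k:ℤ)) hsgn' hwin' hiM hkM hik hkZ hinegZ
        hrefl.2 hAB').1
      rw [mul_tt_tt hik hkZ hinegZ] at hrev
      omega
  have hcore := core X w hsgn hwin hiM hkM hik hkZ hinegZ hrefl.2 hAB
  obtain ⟨h0, noj⟩ := hcore.2 hlen
  -- step 2 : i ≥ -n-1
  have hilow : -(n:ℤ) - 1 ≤ i := by
    by_contra hcon
    push_neg at hcon
    have hwi : w i = i := hwn i (by rw [abs_of_nonpos (by omega)]; omega)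
    have hwj : w (-(n:ℤ)-1) = -(n:ℤ)-1 := hwn _ (by rw [abs_of_nonpos (by omega)]; omega)
    have hwkb := window_map' hwn (by omega : -(n:ℤ) ≤ (k:ℤ)) hknZ
    exact noj (-(n:ℤ)-1) (by omega) (by omega)
      ⟨by rw [hwi, hwj]; omega, by rw [hwj]; omega⟩
  -- parity of negCount change
  have hparity : negCount (w * tt i (k:ℤ)) = negCount w ∨
      negCount (w * tt i (k:ℤ)) = negCount w + 2 := by
    by_cases hipos : 0 < i
    · exact Or.inl (negCount_tt_pos w hik hkZ hinegZ hipos)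
    · by_cases hMix : w i < 0 ∧ 0 < w (k:ℤ)
      · exact Or.inr (negCount_tt_neg_mixed hsgn hwn hik hkZ hinegZ (by omega) hMix.1 hMix.2)
      · exact Or.inl (negCount_tt_neg_same hsgn hik hkZ hinegZ (by omega) hAB hMix)
  have hIsW' : IsW X (w * tt i (k:ℤ)) := by
    cases X with
    | B => exact hsgn'
    | C => exact hsgn'
    | D =>
      obtain ⟨hs, hev⟩ := hw.1
      refine ⟨hsgn', ?_⟩
      rcases hparity with h | h <;> rw [h]
      · exact hev
      · exact hev.add (by norm_num)
  -- part (a)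
  have partA : IsWn X (n + 1) (w * tt i (k:ℤ)) := by
    refine ⟨hIsW', ?_⟩
    intro x hx
    have hx' : ((n:ℤ)+1) < x ∨ ((n:ℤ)+1) < -x := by
      have := lt_abs.mp hx
      push_cast at this
      omega
    rw [mul_apply',
      tt_apply_fix hik hkZ hinegZ x (by omega) (by omega) (by omega) (by omega)]
    exact hwn x (lt_abs.mpr (by omega))
  -- part (b)
  have partB : (w * tt i (k:ℤ)) (k:ℤ) < w (k:ℤ) := by
    rw [mul_apply', tt_apply_k hik hkZ hinegZ h0]
    exact hAB
  -- part (c)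
  have partC : DesSet (w * tt i (k:ℤ)) ⊆ DesSet w ∪ {k - 1} := by
    intro m hm
    obtain ⟨hm0, hmd⟩ := hm
    rw [mul_apply', mul_apply'] at hmd
    by_cases hmk1 : m = k - 1
    · exact Or.inr (Set.mem_singleton_iff.mpr hmk1)
    left
    refine ⟨hm0, ?_⟩
    have ha1 : 1 ≤ (m:ℤ) := by exact_mod_cast hm0
    have hak1' : (m:ℤ) + 1 ≠ (k:ℤ) := by
      intro hcon
      apply hmk1
      omega
    rcases eq_or_ne (m:ℤ) (k:ℤ) with hak | hak
    · rw [hak] at hmd ⊢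
      rw [tt_apply_k hik hkZ hinegZ h0] at hmd
      rcases eq_or_ne ((k:ℤ)+1) (-i) with hai | hai
      · rw [hai, tt_apply_negi hik hkZ hinegZ h0] at hmd
        rw [hai, hnegi]
        rw [hnegk] at hmd
        omega
      · rw [tt_apply_fix hik hkZ hinegZ ((k:ℤ)+1) (by omega) (by omega) hai (by omega)]
          at hmd
        omega
    rcases eq_or_ne (m:ℤ) i with hai2 | hai2
    · -- m = i > 0
      rw [hai2] at hmd hak1' ⊢
      rw [tt_apply_i hik hkZ hinegZ h0] at hmd
      have hipos : 0 < i := by omega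
      rw [tt_apply_fix hik hkZ hinegZ (i+1) (by omega) hak1' (by omega) (by omega)] at hmd
      by_contra hcon
      push_neg at hcon
      have hne2 : w (i+1) ≠ w i := fun hcon2 => by
        have := w.injective hcon2
        omega
      exact noj (i+1) (by omega) (by omega) ⟨by omega, hmd⟩
    rcases eq_or_ne (m:ℤ) (-i) with hai3 | hai3
    · -- m = -i, i < 0
      have hineg2 : i < 0 := by omega
      rw [hai3] at hmd hak1' ⊢
      rw [tt_apply_negi hik hkZ hinegZ h0] at hmd
      rw [tt_apply_fix hik hkZ hinegZ (-i+1) (by omega) hak1' (by omega) (by omega)] at hmd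
      rw [hnegk] at hmd
      rw [hnegi]
      omega
    rcases eq_or_ne ((m:ℤ)+1) i with hbi | hbi
    · -- m+1 = i
      rw [hbi] at hmd
      rw [tt_apply_i hik hkZ hinegZ h0] at hmd
      rw [tt_apply_fix hik hkZ hinegZ (m:ℤ) hai2 hak hai3 (by omega)] at hmd
      rw [hbi]
      omega
    rcases eq_or_ne ((m:ℤ)+1) (-i) with hbi2 | hbi2
    · -- m+1 = -i, i < 0
      have hineg2 : i < 0 := by omega
      rw [hbi2, tt_apply_negi hik hkZ hinegZ h0] at hmd
      rw [tt_apply_fix hik hkZ hinegZ (m:ℤ) hai2 hak hai3 (by omega)] at hmd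
      rw [hnegk] at hmd
      rw [hbi2, hnegi]
      by_contra hcon
      push_neg at hcon
      have hne2 : w (m:ℤ) ≠ -(w i) := by
        intro hcon2
        rw [← hnegi] at hcon2
        have := w.injective hcon2
        omega
      have hwm : w (-(m:ℤ)) = -(w (m:ℤ)) := hsgn.1 (m:ℤ)
      exact noj (-(m:ℤ)) (by omega) (by omega) ⟨by omega, by omega⟩
    · -- generic case
      rw [tt_apply_fix hik hkZ hinegZ (m:ℤ) hai2 hak hai3 (by omega),
        tt_apply_fix hik hkZ hinegZ ((m:ℤ)+1) hbi hak1' hbi2 (by omega)] at hmd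
      exact hmd
  refine ⟨partA, partB, partC, ?_⟩
  -- parts (d) and (e)
  intro hnot
  have hieq : i = -(n:ℤ) - 1 := by
    by_contra hne
    have hgeq : -(n:ℤ) ≤ i := by omega
    apply hnot
    refine ⟨hIsW', ?_⟩
    intro x hx
    have hx' : (n:ℤ) < x ∨ (n:ℤ) < -x := by
      have := lt_abs.mp hx
      omega
    rw [mul_apply',
      tt_apply_fix hik hkZ hinegZ x (by omega) (by omega) (by omega) (by omega)]
    exact hwn x hx
  refine ⟨hieq, ?_⟩
  intro j hj1 hj2 hjneg hjD
  have hwi : w i = i := hwn i (by rw [abs_of_nonpos (by omega)]; omega)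
  have hw'k : (w * tt i (k:ℤ)) (k:ℤ) = i := by
    rw [mul_apply', tt_apply_k hik hkZ hinegZ h0, hwi]
  have hw'win : ∀ x, ((n:ℤ)+1) < |x| → (w * tt i (k:ℤ)) x = x := by
    intro x hx
    have := partA.2 x (by push_cast; omega)
    exact this
  have hjM : |j| ≤ (n:ℤ)+1 := by rw [abs_le]; omega
  have hkM2 : (k:ℤ) ≤ (n:ℤ)+1 := by omega
  have hw'j_bounds := window_map' hw'win (by omega : -((n:ℤ)+1) ≤ j) (by omega : j ≤ (n:ℤ)+1)
  have hw'j_ne : (w * tt i (k:ℤ)) j ≠ i := by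
    intro hcon
    have : (w * tt i (k:ℤ)) j = (w * tt i (k:ℤ)) (k:ℤ) := by rw [hcon, hw'k]
    have := (w * tt i (k:ℤ)).injective this
    omega
  have hBA' : (w * tt i (k:ℤ)) (k:ℤ) < (w * tt i (k:ℤ)) j := by
    rw [hw'k]
    omega
  -- now apply core to w'' = w' * tt j k
  have hsgn_tj : IsSgn (tt j (k:ℤ)) := IsSgn_tt hj2 hkZ hjneg
  have hsgn'' : IsSgn (w * tt i (k:ℤ) * tt j (k:ℤ)) := IsSgn_mul hsgn' hsgn_tj
  have hw''win : ∀ x, ((n:ℤ)+1) < |x| → (w * tt i (k:ℤ) * tt j (k:ℤ)) x = x :=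
    window_mul_tt hw'win hj2 hkZ hjneg hjM hkM2
  have hAB'' : (w * tt i (k:ℤ) * tt j (k:ℤ)) j < (w * tt i (k:ℤ) * tt j (k:ℤ)) (k:ℤ) := by
    by_cases hj0 : j = 0
    · subst hj0
      have e1 : (w * tt i (k:ℤ) * tt 0 (k:ℤ)) 0 = 0 := by
        rw [mul_apply', tt_zero_eq, Equiv.swap_apply_of_ne_of_ne (by omega) (by omega)]
        exact sgn_zero hsgn'
      have e2 : (w * tt i (k:ℤ) * tt 0 (k:ℤ)) (k:ℤ) = -((w * tt i (k:ℤ)) (k:ℤ)) := by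
        rw [mul_apply', tt_zero_eq, Equiv.swap_apply_right, hsgn'.1 (k:ℤ)]
      rw [e1, e2, hw'k]
      omega
    · have e1 : (w * tt i (k:ℤ) * tt j (k:ℤ)) j = (w * tt i (k:ℤ)) (k:ℤ) := by
        rw [mul_apply', tt_apply_i hj2 hkZ hjneg hj0]
      have e2 : (w * tt i (k:ℤ) * tt j (k:ℤ)) (k:ℤ) = (w * tt i (k:ℤ)) j := by
        rw [mul_apply', tt_apply_k hj2 hkZ hjneg hj0]
      rw [e1, e2, hw'k]
      omega
  have hfin := (core X (w * tt i (k:ℤ) * tt j (k:ℤ)) hsgn'' hw''win hjM hkM2 hj2 hkZ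
    hjneg hjD hAB'').1
  rw [mul_tt_tt hj2 hkZ hjneg] at hfin
  omega

/-- Technical lemma on length-increasing reflections:
if `w ∈ W^X_n`, `i < k ≤ n`, `t = t_{ik}` is a reflection with
`ℓ^X(wt) = ℓ^X(w)+1`, then `wt ∈ W^X_{n+1}`, `wt(k) < w(k)`,
`Des(wt) ⊆ Des(w) ∪ {k-1}`, and when `wt ∉ W^X_n` one has `i = -n-1` and no
further length-increasing reflection `t_{jk}` with `i < j < k` exists. -/
theorem reflection_length_lemma (X : XType) (n : ℕ) (hn : 0 < n)
    (w : SPerm) (hw : IsWn X n w) (i : ℤ) (k : ℕ)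
    (hik : i < (k : ℤ)) (hk1 : 1 ≤ k) (hkn : k ≤ n)
    (hrefl : i ≠ -(k : ℤ) ∧ (X = XType.D → i ≠ 0))
    (hlen : lenX X (w * tt i (k : ℤ)) = lenX X w + 1) :
    IsWn X (n + 1) (w * tt i (k : ℤ)) ∧
    (w * tt i (k : ℤ)) (k : ℤ) < w (k : ℤ) ∧
    DesSet (w * tt i (k : ℤ)) ⊆ DesSet w ∪ {k - 1} ∧
    (¬ IsWn X n (w * tt i (k : ℤ)) →
      i = -(n : ℤ) - 1 ∧
      ∀ j : ℤ, i < j → j < (k : ℤ) → j ≠ -(k : ℤ) → (X = XType.D → j ≠ 0) →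
        lenX X (w * tt i (k : ℤ) * tt j (k : ℤ)) ≠
          lenX X (w * tt i (k : ℤ)) + 1) := by
  exact reflection_length_lemma' X n hn w hw i k hik hk1 hkn hrefl hlen
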